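/- arXiv:2009.12762 — 3 statements merged into one kernel-verified Lean document; each statement's English description precedes it below -/
import Mathlib

section
/- With Θ and N_{σ,τ} as above, one has |N_{σ,τ}| ≤ max( (1/4)/√(j²+k²), (1/4)/√(J²+K²) ). -/
open Real


lemma cs_aux (x y u v : ℝ) : (x*v - y*u)^2 ≤ (x^2+y^2)*(u^2+v^2) := by
  nlinarith [sq_nonneg (x*u + y*v)]

set_option maxHeartbeats 1000000 in
theorem stmt1 (J K j k : ℕ) (hJ : 0 < J) (hK : 0 < K) (hj : 0 < j) (hk : 0 < k)
    (σ τ : ℝ) (hσ : σ = 1 ∨ σ = -1) (hτ : τ = 1 ∨ τ = -1)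
    (Θ N : ℝ)
    (hΘ : Θ = (1/4) * (1/((J:ℝ)^2+(K:ℝ)^2) - 1/((j:ℝ)^2+(k:ℝ)^2)))
    (hden : Real.sqrt ((σ*J+j)^2 + (τ*K+k)^2) ≠ 0)
    (hN : N = Θ * (σ*J*k - τ*K*j) / Real.sqrt ((σ*J+j)^2 + (τ*K+k)^2)) :
    |N| ≤ max ((1/4) / Real.sqrt ((j:ℝ)^2+(k:ℝ)^2))
              ((1/4) / Real.sqrt ((J:ℝ)^2+(K:ℝ)^2)) := by
  set A : ℝ := (J:ℝ)^2+(K:ℝ)^2 with hAdef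
  set B : ℝ := (j:ℝ)^2+(k:ℝ)^2 with hBdef
  have hJ' : (1:ℝ) ≤ J := by exact_mod_cast hJ
  have hK' : (1:ℝ) ≤ K := by exact_mod_cast hK
  have hj' : (1:ℝ) ≤ j := by exact_mod_cast hj
  have hk' : (1:ℝ) ≤ k := by exact_mod_cast hk
  have hA : (0:ℝ) < A := by positivity
  have hσ2 : σ^2 = 1 := by rcases hσ with h|h <;> rw [h] <;> norm_num
  have hτ2 : τ^2 = 1 := by rcases hτ with h|h <;> rw [h] <;> norm_num
  have hB : (0:ℝ) < B := by positivity
  set D : ℝ := Real.sqrt ((σ*J+j)^2 + (τ*K+k)^2) with hDdef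
  have hDnn : 0 ≤ D := Real.sqrt_nonneg _
  have hD : 0 < D := lt_of_le_of_ne hDnn (Ne.symm hden)
  have hD2 : D^2 = (σ*J+j)^2 + (τ*K+k)^2 := Real.sq_sqrt (by positivity)
  set sA : ℝ := Real.sqrt A with hsAdef
  set sB : ℝ := Real.sqrt B with hsBdef
  have hsA : 0 < sA := Real.sqrt_pos.mpr hA
  have hsB : 0 < sB := Real.sqrt_pos.mpr hB
  have hsA2 : sA^2 = A := Real.sq_sqrt hA.le
  have hsB2 : sB^2 = B := Real.sq_sqrt hB.le
  -- two Cauchy-Schwarz bounds on the numerator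
  have key1 : |σ*J*k - τ*K*j| ≤ D * sB := by
    have h : (σ*J*k - τ*K*j)^2 ≤ (D*sB)^2 := by
      have hds : (D*sB)^2 = ((σ*J+j)^2 + (τ*K+k)^2) * B := by
        rw [mul_pow, hD2, hsB2]
      rw [hds, hBdef]
      have hcs := cs_aux (σ*J+j) (τ*K+k) (j:ℝ) (k:ℝ)
      have heq : (σ*J*k - τ*K*j)^2 = ((σ*J+j)*k - (τ*K+k)*j)^2 := by ring
      rw [heq]
      calc ((σ*J+j)*k - (τ*K+k)*j)^2 ≤ ((σ*J+j)^2+(τ*K+k)^2)*((j:ℝ)^2+(k:ℝ)^2) := hcs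
        _ = ((σ*J+j)^2+(τ*K+k)^2)*((j:ℝ)^2+(k:ℝ)^2) := rfl
    calc |σ*J*k - τ*K*j| = Real.sqrt ((σ*J*k - τ*K*j)^2) := (Real.sqrt_sq_eq_abs _).symm
      _ ≤ Real.sqrt ((D*sB)^2) := Real.sqrt_le_sqrt h
      _ = D * sB := by rw [Real.sqrt_sq (by positivity)]
  have key2 : |σ*J*k - τ*K*j| ≤ D * sA := by
    have h : (σ*J*k - τ*K*j)^2 ≤ (D*sA)^2 := by
      have hds : (D*sA)^2 = ((σ*J+j)^2 + (τ*K+k)^2) * A := by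
        rw [mul_pow, hD2, hsA2]
      rw [hds, hAdef]
      have hcs := cs_aux (σ*J+j) (τ*K+k) (σ*J) (τ*K)
      have heq : (σ*J*k - τ*K*j)^2 = ((σ*J+j)*(τ*K) - (τ*K+k)*(σ*J))^2 := by ring
      have huv : (σ*J)^2+(τ*K)^2 = (J:ℝ)^2+(K:ℝ)^2 := by
        rw [mul_pow, mul_pow, hσ2, hτ2]; ring
      rw [heq, ← huv]
      exact hcs
    calc |σ*J*k - τ*K*j| = Real.sqrt ((σ*J*k - τ*K*j)^2) := (Real.sqrt_sq_eq_abs _).symm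
      _ ≤ Real.sqrt ((D*sA)^2) := Real.sqrt_le_sqrt h
      _ = D * sA := by rw [Real.sqrt_sq (by positivity)]
  have habsN : |N| = |Θ| * |σ*J*k - τ*K*j| / D := by
    rw [hN, abs_div, abs_mul, abs_of_pos hD]
  rcases le_total A B with hAB | hAB
  · -- A ≤ B : target right side
    apply le_trans _ (le_max_right _ _)
    have hinv : 1/B ≤ 1/A := one_div_le_one_div_of_le hA hAB
    have hBpos : 0 < 1/B := by positivity
    have hΘb : |Θ| ≤ 1/(4*A) := by
      rw [hΘ, abs_of_nonneg (by linarith)]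
      have : 1/(4*A) = (1/4)*(1/A) := by rw [div_mul_div_comm]; norm_num
      rw [this]; nlinarith
    have h1 : |N| ≤ (1/(4*A)) * (D * sA) / D := by
      rw [habsN]; gcongr
    have h2 : (1/(4*A)) * (D * sA) / D = (1/4) / sA := by
      rw [← hsA2]; field_simp
    rw [h2] at h1; exact h1
  · apply le_trans _ (le_max_left _ _)
    have hinv : 1/A ≤ 1/B := one_div_le_one_div_of_le hB hAB
    have hApos : 0 < 1/A := by positivity
    have hΘb : |Θ| ≤ 1/(4*B) := by
      rw [hΘ, abs_of_nonpos (by linarith)]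
      have : 1/(4*B) = (1/4)*(1/B) := by rw [div_mul_div_comm]; norm_num
      rw [this]; nlinarith
    have h1 : |N| ≤ (1/(4*B)) * (D * sB) / D := by
      rw [habsN]; gcongr
    have h2 : (1/(4*B)) * (D * sB) / D = (1/4) / sB := by
      rw [← hsB2]; field_simp
    rw [h2] at h1; exact h1
end

section
/- Let B be a Banach space, D ⊆ B open, F : D → B a C¹ map, φ ∈ B, L : B → B bounded linear. Suppose the quasi-Newton map N(h) = F(φ+Lh) − φ + (I−L)h is defined on the closed ball B_δ = {h : ‖h‖ ≤ δ} (i.e. φ+Lh ∈ D for all such h), and there are ε, K > 0 with ε + Kδ < δ such that ‖N(0)‖ < ε and ‖DN(h)‖ < K for all h ∈ B_δ. Then F has a fixed point in the set φ + L(B_δ). -/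
theorem stmt7 {B : Type*} [NormedAddCommGroup B] [NormedSpace ℝ B] [CompleteSpace B]
    (D : Set B) (hD : IsOpen D) (F : B → B) (hF : ContDiffOn ℝ 1 F D)
    (φ : B) (L : B →L[ℝ] B) (N : B → B)
    (hN : ∀ h, N h = F (φ + L h) - φ + (h - L h))
    (δ ε K : ℝ) (hδ : 0 < δ) (hε : 0 < ε) (hK : 0 < K) (hsmall : ε + K * δ < δ)
    (hdom : ∀ h : B, ‖h‖ ≤ δ → φ + L h ∈ D)
    (hN0 : ‖N 0‖ < ε)
    (hdiff : ∀ h : B, ‖h‖ ≤ δ → DifferentiableAt ℝ N h ∧ ‖fderiv ℝ N h‖ < K) :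
    ∃ x ∈ (fun h => φ + L h) '' Metric.closedBall (0 : B) δ, F x = x := by
  set s : Set B := Metric.closedBall (0 : B) δ with hs
  have hmem : ∀ h : B, h ∈ s ↔ ‖h‖ ≤ δ := by
    intro h; simp [hs, Metric.mem_closedBall, dist_zero_right]
  have hconv : Convex ℝ s := convex_closedBall _ _
  have hlip : ∀ x ∈ s, ∀ y ∈ s, ‖N y - N x‖ ≤ K * ‖y - x‖ := by
    intro x hx y hy
    exact hconv.norm_image_sub_le_of_norm_fderiv_le
      (fun z hz => (hdiff z ((hmem z).1 hz)).1)
      (fun z hz => le_of_lt (hdiff z ((hmem z).1 hz)).2) hx hy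
  have h0s : (0 : B) ∈ s := by rw [hmem]; simp [le_of_lt hδ]
  have hmaps : ∀ h ∈ s, N h ∈ s := by
    intro h hh
    rw [hmem]
    have h1 : ‖N h - N 0‖ ≤ K * ‖h - 0‖ := hlip 0 h0s h hh
    have h2 : ‖N h‖ ≤ ‖N 0‖ + ‖N h - N 0‖ := by
      calc ‖N h‖ = ‖N 0 + (N h - N 0)‖ := congrArg norm (by abel)
        _ ≤ ‖N 0‖ + ‖N h - N 0‖ := norm_add_le _ _
    have h3 : ‖h - 0‖ ≤ δ := by simpa using (hmem h).1 hh
    have := mul_le_mul_of_nonneg_left h3 (le_of_lt hK)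
    nlinarith
  have hK1 : K < 1 := by nlinarith
  -- contraction on the subtype
  have hclosed : IsClosed s := Metric.isClosed_closedBall
  haveI : CompleteSpace s := hclosed.completeSpace_coe
  haveI : Nonempty s := ⟨⟨0, h0s⟩⟩
  set f : s → s := fun x => ⟨N x, hmaps x x.2⟩ with hf'
  have hKnn : (0:ℝ) ≤ K := le_of_lt hK
  have hcontr : ContractingWith ⟨K, hKnn⟩ f := by
    constructor
    · exact_mod_cast hK1
    · apply LipschitzWith.of_dist_le_mul
      intro x y
      simp only [hf', Subtype.dist_eq, dist_eq_norm]
      exact hlip y y.2 x x.2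
  obtain ⟨h, hfix, -⟩ := hcontr.exists_fixedPoint ⟨0, h0s⟩ (edist_ne_top _ _)
  have hNh : N (h : B) = (h : B) := by
    have := congrArg (Subtype.val) hfix
    simpa [hf', Function.IsFixedPt] using this
  refine ⟨φ + L h, ⟨h, h.2, rfl⟩, ?_⟩
  have heq : (h : B) = F (φ + L (h:B)) - φ + ((h:B) - L (h:B)) := by
    rw [← hN]; exact hNh.symm
  rw [eq_comm, ← sub_eq_zero]
  rw [← sub_eq_zero] at heq
  abel_nf at heq ⊢
  exact heq
end

section
/- Let Φ = sin(Jx)sin(Ky) and φ = sin(jx)sin(ky) with J,K,j,k positive integers, and define u = J∇Δ⁻¹ (i.e. u = 𝕁∇Δ⁻¹Φ where 𝕁 is rotation by −90°, Δ the Dirichlet Laplacian so Δ⁻¹Φ = −Φ/(J²+K²)). Then the symmetric bilinear expression L(Φ)φ = (∇Φ)·𝕁∇Δ⁻¹φ + (∇φ)·𝕁∇Δ⁻¹Φ equals Θ(Jk+jK)[sin((J+j)x)sin((K−k)y) − sin((J−j)x)sin((K+k)y)] + Θ(Jk−jK)[sin((J+j)x)sin((K+k)y) − sin((J−j)x)sin((K−k)y)],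 where Θ = (1/4)(1/(J²+K²) − 1/(j²+k²)). -/
open Real

theorem stmt16 (J K j k : ℕ) (hJ : 0 < J) (hK : 0 < K) (hj : 0 < j) (hk : 0 < k)
    (Θ : ℝ) (hΘ : Θ = (1/4) * (1/((J:ℝ)^2+(K:ℝ)^2) - 1/((j:ℝ)^2+(k:ℝ)^2))) :
    ∀ x y : ℝ,
      (((J:ℝ) * Real.cos (J * x) * Real.sin (K * y)) *
          (-(((k:ℝ) * Real.sin (j * x) * Real.cos (k * y)) / ((j:ℝ)^2+(k:ℝ)^2)))
        - ((K:ℝ) * Real.sin (J * x) * Real.cos (K * y)) *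
          (-(((j:ℝ) * Real.cos (j * x) * Real.sin (k * y)) / ((j:ℝ)^2+(k:ℝ)^2))))
      + (((j:ℝ) * Real.cos (j * x) * Real.sin (k * y)) *
          (-(((K:ℝ) * Real.sin (J * x) * Real.cos (K * y)) / ((J:ℝ)^2+(K:ℝ)^2)))
        - ((k:ℝ) * Real.sin (j * x) * Real.cos (k * y)) *
          (-(((J:ℝ) * Real.cos (J * x) * Real.sin (K * y)) / ((J:ℝ)^2+(K:ℝ)^2))))
      =
      Θ * ((J:ℝ)*k + (j:ℝ)*K) *
          (Real.sin (((J:ℝ)+j) * x) * Real.sin (((K:ℝ)-k) * y)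
            - Real.sin (((J:ℝ)-j) * x) * Real.sin (((K:ℝ)+k) * y))
      + Θ * ((J:ℝ)*k - (j:ℝ)*K) *
          (Real.sin (((J:ℝ)+j) * x) * Real.sin (((K:ℝ)+k) * y)
            - Real.sin (((J:ℝ)-j) * x) * Real.sin (((K:ℝ)-k) * y)) := by
  intro x y
  have hA : ((J:ℝ)^2+(K:ℝ)^2) ≠ 0 := by positivity
  have hB : ((j:ℝ)^2+(k:ℝ)^2) ≠ 0 := by positivity
  subst hΘ
  rw [add_mul, sub_mul, add_mul, sub_mul, Real.sin_add, Real.sin_sub, Real.sin_add, Real.sin_sub]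
  field_simp
  ring
end
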